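/- Let t ≥ 1 and let n, K be integers with K ≥ 2 and n > K+1. Then Φ(n,K,2^t) ≤ 2^{t−1}·(n−K); that is, every rank-K linear code of length n over ℤ_{2^t} has minimum Lee distance at most 2^{t−1}·(n−K). -/

import Mathlib

set_option maxHeartbeats 1000000
set_option synthInstance.maxHeartbeats 400000

/-- Lee weight of an element of `ZMod q`. -/
noncomputable def leeWt {q : ℕ} (a : ZMod q) : ℕ := min (ZMod.val a) (q - ZMod.val a)

/-- Lee weight of a vector over `ZMod q`. -/
noncomputable def leeWtVec {q n : ℕ} (x : Fin n → ZMod q) : ℕ := ∑ i, leeWt (x i)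

/-- Minimum Lee distance (= minimum Lee weight of a nonzero codeword) of a linear code. -/
noncomputable def minLee {q n : ℕ} (C : Submodule (ZMod q) (Fin n → ZMod q)) : ℕ :=
  sInf {w | ∃ x ∈ C, x ≠ 0 ∧ leeWtVec x = w}

/-- Minimum Hamming distance (= minimum Hamming weight of a nonzero codeword). -/
noncomputable def minHam {q n : ℕ} (C : Submodule (ZMod q) (Fin n → ZMod q)) : ℕ :=
  sInf {w | ∃ x ∈ C, x ≠ 0 ∧ hammingNorm x = w}

/-- Average nonzero Lee weight of `ZMod q`. -/
noncomputable def mu (q : ℕ) : ℚ :=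
  if Even q then (q : ℚ)^2 / (4 * ((q : ℚ) - 1)) else ((q : ℚ) + 1) / 4

/-- `Phi n k p`: the maximum minimum Lee distance over `k`-dimensional linear codes
of length `n` over `ZMod p`. -/
noncomputable def Phi (n k p : ℕ) : ℕ :=
  sSup {d | ∃ C : Submodule (ZMod p) (Fin n → ZMod p),
    Module.finrank (ZMod p) ↥C = k ∧ minLee C = d}

/-- Rank of a linear code over `ZMod q`: minimal number of generators. -/
noncomputable def codeRank {q n : ℕ} (C : Submodule (ZMod q) (Fin n → ZMod q)) : ℕ :=
  sInf {m | ∃ s : Finset (Fin n → ZMod q), s.card = m ∧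
    Submodule.span (ZMod q) (↑s : Set (Fin n → ZMod q)) = C}

/-- `PhiR n K q`: the maximum minimum Lee distance over rank-`K` linear codes of
length `n` over `ZMod q`. -/
noncomputable def PhiR (n K q : ℕ) : ℕ :=
  sSup {d | ∃ C : Submodule (ZMod q) (Fin n → ZMod q), codeRank C = K ∧ minLee C = d}

lemma leeWt_le {t : ℕ} (ht : 1 ≤ t) (a : ZMod (2^t)) :
    leeWt a ≤ 2^(t-1) := by
  haveI : NeZero (2^t) := ⟨pow_ne_zero _ two_ne_zero⟩
  rw [leeWt]
  have h2 : 2^t = 2 * 2^(t-1) := by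
    conv_lhs => rw [show t = 1 + (t-1) by omega]
    rw [pow_add, pow_one]
  have hv : ZMod.val a < 2^t := ZMod.val_lt a
  rcases le_or_gt (ZMod.val a) (2^(t-1)) with h | h
  · exact le_trans (min_le_left _ _) h
  · exact le_trans (min_le_right _ _) (by omega)

lemma gen_bound {Q : Type} [AddCommGroup Q] [Finite Q] (h2 : ∀ x : Q, x + x = 0) :
    ∃ r : ℕ, Nat.card Q = 2^r ∧ ∃ g : Fin r → Q,
      AddSubgroup.closure (Set.range g) = ⊤ := by
  haveI : Fact (Nat.Prime 2) := ⟨Nat.prime_two⟩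
  letI : Module (ZMod 2) Q := AddCommGroup.zmodModule (n := 2)
    (by intro x; rw [two_nsmul]; exact h2 x)
  letI : Fintype Q := Fintype.ofFinite Q
  haveI : Module.Finite (ZMod 2) Q := Module.Finite.of_finite
  let b := Module.finBasis (ZMod 2) Q
  refine ⟨Module.finrank (ZMod 2) Q, ?_, ⇑b, ?_⟩
  · rw [Nat.card_eq_fintype_card, Module.card_eq_pow_finrank (K := ZMod 2) (V := Q), ZMod.card]
  · rw [eq_top_iff]
    intro x _
    have hx : x ∈ Submodule.span (ZMod 2) (Set.range ⇑b) := by rw [b.span_eq]; trivial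
    have hle : Submodule.span (ZMod 2) (Set.range ⇑b) ≤
        AddSubgroup.toZModSubmodule 2 (AddSubgroup.closure (Set.range ⇑b)) :=
      Submodule.span_le.mpr AddSubgroup.subset_closure
    exact hle hx

lemma two_torsion_cases {t : ℕ} (ht : 1 ≤ t) (x : ZMod (2^t)) (hx : x + x = 0) :
    x = 0 ∨ x = ((2^(t-1) : ℕ) : ZMod (2^t)) := by
  haveI : NeZero (2^t) := ⟨pow_ne_zero _ two_ne_zero⟩
  have h2 : 2^t = 2 * 2^(t-1) := by
    conv_lhs => rw [show t = 1 + (t-1) by omega]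
    rw [pow_add, pow_one]
  have hv : x.val < 2^t := ZMod.val_lt x
  have hcast : ((x.val : ℕ) : ZMod (2^t)) = x := ZMod.natCast_zmod_val x
  have hdvd : (2^t : ℕ) ∣ (x.val + x.val) := by
    rw [← ZMod.natCast_eq_zero_iff]
    push_cast
    rw [hcast, hx]
  obtain ⟨k, hk⟩ := hdvd
  have hB : 0 < 2^(t-1) := Nat.pow_pos (by norm_num)
  have hk2 : k < 2 := by
    by_contra hge
    push_neg at hge
    have : 2^t * 2 ≤ 2^t * k := Nat.mul_le_mul_left _ hge
    omega
  interval_cases k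
  · left; rw [← hcast]
    have : x.val = 0 := by omega
    rw [this]; simp
  · right; rw [← hcast]
    congr 1
    omega

lemma exists_low_weight {t n K : ℕ} (ht : 1 ≤ t) (hK : 2 ≤ K) (hn : K + 1 < n)
    (C : Submodule (ZMod (2^t)) (Fin n → ZMod (2^t))) (hrank : codeRank C = K) :
    ∃ x ∈ C, x ≠ 0 ∧ hammingNorm x ≤ n - K := by
  classical
  haveI : NeZero (2^t) := ⟨pow_ne_zero _ two_ne_zero⟩
  by_contra hcon
  push_neg at hcon
  set R := ZMod (2^t) with hR
  have h2 : 2^t = 2 * 2^(t-1) := by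
    conv_lhs => rw [show t = 1 + (t-1) by omega]
    rw [pow_add, pow_one]
  set h : ZMod (2^t) := ((2^(t-1) : ℕ) : ZMod (2^t)) with hh
  have hB : 0 < 2^(t-1) := Nat.pow_pos (by norm_num)
  have hhne : h ≠ 0 := by
    rw [hh, Ne, ZMod.natCast_eq_zero_iff]
    intro hdvd
    have := Nat.le_of_dvd hB hdvd
    omega
  have hhh : h + h = 0 := by
    rw [hh, ← Nat.cast_add, show 2^(t-1)+2^(t-1) = 2^t by omega, ZMod.natCast_self]
  -- injectivity tool
  have inj2 : ∀ x ∈ C, ∀ y ∈ C, ∀ u : Fin K → Fin n, Function.Injective u →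
      (∀ j, x (u j) = y (u j)) → x = y := by
    intro x hx y hy u hu hagree
    by_contra hne
    have hlow : hammingNorm (x - y) ≤ n - K := by
      have hsub : (Finset.univ.filter fun i => (x - y) i ≠ 0) ⊆
          Finset.univ \ Finset.image u Finset.univ := by
        intro i hi
        simp only [Finset.mem_filter, Finset.mem_univ, true_and] at hi
        rw [Finset.mem_sdiff]
        refine ⟨Finset.mem_univ _, ?_⟩
        intro hmem
        obtain ⟨j, _, rfl⟩ := Finset.mem_image.mp hmem
        exact hi (by simp [Pi.sub_apply, hagree j])
      calc hammingNorm (x-y) ≤ (Finset.univ \ Finset.image u Finset.univ).card :=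
            Finset.card_le_card hsub
        _ = n - K := by
            rw [Finset.card_sdiff_of_subset (Finset.subset_univ _),
              Finset.card_image_of_injective _ hu]
            simp
    have := hcon (x - y) (sub_mem hx hy) (sub_ne_zero.mpr hne)
    omega
  -- the doubling map and the socle
  let f : ↥C →ₗ[R] ↥C := (2 : R) • LinearMap.id
  have hfapp : ∀ x : ↥C, f x = (2 : R) • x := fun x => rfl
  have hcardQ : Nat.card (↥C ⧸ LinearMap.range f) = Nat.card (LinearMap.ker f) := by
    have h1 := Submodule.card_eq_card_quotient_mul_card (LinearMap.range f)
    have h2' := Submodule.card_eq_card_quotient_mul_card (LinearMap.ker f)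
    have h3 : Nat.card (↥C ⧸ LinearMap.ker f) = Nat.card (LinearMap.range f) :=
      Nat.card_congr (f.quotKerEquivRange).toEquiv
    rw [h3] at h2'
    haveI : Nonempty ↥(LinearMap.range f) := ⟨0⟩
    have hpos : 0 < Nat.card (LinearMap.range f) := Nat.card_pos
    apply Nat.eq_of_mul_eq_mul_left hpos
    rw [← h1, h2', mul_comm]
  have hmin : ∀ s : Finset (Fin n → R), Submodule.span R (↑s : Set (Fin n → R)) = C →
      K ≤ s.card := by
    intro s hs
    by_contra hlt
    push_neg at hlt
    have : codeRank C ≤ s.card := Nat.sInf_le ⟨s, rfl, hs⟩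
    omega
  have hSoc : 2^K ≤ Nat.card (LinearMap.ker f) := by
    by_contra hlt
    push_neg at hlt
    rw [← hcardQ] at hlt
    have htor2 : ∀ z : ↥C ⧸ LinearMap.range f, z + z = 0 := by
      intro z
      obtain ⟨z, rfl⟩ := Submodule.Quotient.mk_surjective _ z
      rw [← Submodule.Quotient.mk_add, Submodule.Quotient.mk_eq_zero]
      exact ⟨z, by rw [hfapp, two_smul]⟩
    obtain ⟨r, hr, g, hg⟩ := gen_bound (Q := ↥C ⧸ LinearMap.range f) htor2
    have hrK : r < K := by
      rw [hr] at hlt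
      exact Nat.pow_lt_pow_iff_right (by norm_num) |>.mp hlt
    have hsurj := Submodule.Quotient.mk_surjective (LinearMap.range f)
    choose y hy using fun i => hsurj (g i)
    set s : Finset (Fin n → R) :=
      Finset.image (fun i => ((y i : ↥C) : Fin n → R)) Finset.univ with hsdef
    set W := Submodule.span R (↑s : Set (Fin n → R)) with hWdef
    have hWC : W ≤ C := by
      rw [hWdef, Submodule.span_le]
      intro v hv
      simp only [hsdef, Finset.coe_image, Set.mem_image, Finset.mem_coe] at hv
      obtain ⟨i, _, rfl⟩ := hv
      exact (y i).2
    have hyW : ∀ i, ((y i : ↥C) : Fin n → R) ∈ W := by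
      intro i
      apply Submodule.subset_span
      simp [hsdef]
    have step : ∀ c ∈ C, ∃ w ∈ W, ∃ d ∈ C, c = w + (2 : R) • d := by
      intro c hc
      have hmem : Submodule.Quotient.mk (p := LinearMap.range f) (⟨c, hc⟩ : ↥C) ∈
          AddSubgroup.closure (Set.range g) := by rw [hg]; trivial
      have hrange : Set.range g =
          ⇑((LinearMap.range f).mkQ).toAddMonoidHom '' Set.range y := by
        rw [← Set.range_comp]
        apply congrArg
        funext i
        exact (hy i).symm
      rw [hrange, ← AddMonoidHom.map_closure] at hmem
      obtain ⟨z, hz, hzc⟩ := hmem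
      have hzW : ((z : ↥C) : Fin n → R) ∈ W := by
        have hle : AddSubgroup.closure (Set.range y) ≤
            ((W.comap C.subtype).toAddSubgroup) := by
          apply AddSubgroup.closure_le _ |>.mpr
          intro v hv
          obtain ⟨i, rfl⟩ := hv
          exact hyW i
        exact hle hz
      have : (⟨c, hc⟩ : ↥C) - z ∈ LinearMap.range f := by
        rw [← Submodule.Quotient.eq]
        exact hzc.symm
      obtain ⟨d, hd⟩ := this
      refine ⟨(z : Fin n → R), hzW, ((d : ↥C) : Fin n → R), d.2, ?_⟩
      rw [hfapp] at hd
      have := congrArg (fun v : ↥C => (v : Fin n → R)) hd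
      simp only [Submodule.coe_smul, Submodule.coe_sub] at this
      rw [this]
      abel
    have iter : ∀ j : ℕ, ∀ c ∈ C, ∃ w ∈ W, ∃ d ∈ C, c = w + ((2 : R)^j) • d := by
      intro j
      induction j with
      | zero => exact fun c hc => ⟨0, zero_mem _, c, hc, by simp⟩
      | succ j ih =>
        intro c hc
        obtain ⟨w, hw, d, hd, hcd⟩ := ih c hc
        obtain ⟨w', hw', d', hd', hdd⟩ := step d hd
        refine ⟨w + (2 : R)^j • w', add_mem hw (Submodule.smul_mem _ _ hw'), d', hd', ?_⟩
        rw [hcd, hdd, smul_add, ← add_assoc, smul_smul, ← pow_succ]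
    have hCW : C ≤ W := by
      intro c hc
      obtain ⟨w, hw, d, hd, hcd⟩ := iter t c hc
      have h20 : (2 : R)^t = 0 := by
        have h0 : ((2^t : ℕ) : ZMod (2^t)) = 0 := ZMod.natCast_self _
        push_cast at h0
        exact h0
      rw [hcd, h20, zero_smul, add_zero]
      exact hw
    have hspan : Submodule.span R (↑s : Set (Fin n → R)) = C := le_antisymm hWC hCW
    have := hmin s hspan
    have hcard : s.card ≤ r := le_trans Finset.card_image_le (by simp)
    omega
  -- socle coordinates
  have hker2 : ∀ x : ↥(LinearMap.ker f), ((x : ↥C) : Fin n → R) + ((x : ↥C) : Fin n → R) = 0 := by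
    intro x
    have hx := x.2
    rw [LinearMap.mem_ker, hfapp] at hx
    have hx2 := congrArg (fun v : ↥C => (v : Fin n → R)) hx
    simp only [Submodule.coe_smul, ZeroMemClass.coe_zero] at hx2
    rw [two_smul] at hx2
    exact hx2
  set v : ↥(LinearMap.ker f) → (Fin n → R) := fun x => ((x : ↥C) : Fin n → R) with hv
  have hmemC : ∀ x, v x ∈ C := fun x => (x : ↥C).2
  have coords : ∀ x i, v x i = 0 ∨ v x i = h := by
    intro x i
    have := congrFun (hker2 x) i
    exact two_torsion_cases ht (v x i) (by simpa using this)
  set e : Fin K → Fin n := fun j => ⟨j.val, by have := j.2; omega⟩ with he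
  have he_inj : Function.Injective e := by
    intro a b hab
    have := congrArg Fin.val hab
    exact Fin.ext this
  letI : Fintype ↥(LinearMap.ker f) := Fintype.ofFinite _
  set θ : ↥(LinearMap.ker f) → (Fin K → Bool) := fun x j => decide (v x (e j) = h) with hθ
  have hθinj : Function.Injective θ := by
    intro x y hxy
    have hagree : ∀ j, v x (e j) = v y (e j) := by
      intro j
      have hj : (v x (e j) = h) ↔ (v y (e j) = h) := by
        have := congrFun hxy j
        simpa [hθ, decide_eq_decide] using this
      rcases coords x (e j) with h1 | h1 <;> rcases coords y (e j) with h2 | h2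
      · rw [h1, h2]
      · exfalso; rw [h1, h2] at hj; exact hhne (hj.mpr rfl).symm
      · exfalso; rw [h1, h2] at hj; exact hhne (hj.mp rfl).symm
      · rw [h1, h2]
    have := inj2 (v x) (hmemC x) (v y) (hmemC y) e he_inj hagree
    apply Subtype.ext
    apply Subtype.ext
    exact this
  have hcardB : Fintype.card (Fin K → Bool) = 2^K := by simp
  have hcards : Fintype.card ↥(LinearMap.ker f) = Fintype.card (Fin K → Bool) := by
    refine le_antisymm (Fintype.card_le_of_injective θ hθinj) ?_
    rw [hcardB, ← Nat.card_eq_fintype_card]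
    exact hSoc
  have hθsurj : Function.Surjective θ :=
    ((Fintype.bijective_iff_injective_and_card θ).mpr ⟨hθinj, hcards⟩).2
  set j0 : Fin K := ⟨0, by omega⟩ with hj0def
  set j1 : Fin K := ⟨1, by omega⟩ with hj1def
  have hj01 : j0 ≠ j1 := by
    intro hc
    have := congrArg Fin.val hc
    simp [hj0def, hj1def] at this
  obtain ⟨pa, hpa⟩ : ∃ pa : Fin n, (pa : ℕ) = K := ⟨⟨K, by omega⟩, rfl⟩
  obtain ⟨pb, hpb⟩ : ∃ pb : Fin n, (pb : ℕ) = K + 1 := ⟨⟨K+1, by omega⟩, rfl⟩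
  -- out-of-range coordinates are h
  have hout : ∀ (x : ↥(LinearMap.ker f)) (i : Fin K) (m : Fin n), K ≤ m.val →
      (v x (e i) = h) → (∀ j, j ≠ i → v x (e j) = 0) → v x m = h := by
    intro x i m hm hi hrest
    rcases coords x m with h0 | hhm
    swap
    · exact hhm
    exfalso
    obtain ⟨u, hu⟩ : ∃ u : Fin K → Fin n, ∀ j, u j = if j = i then m else e j :=
      ⟨_, fun j => rfl⟩
    have huv : ∀ j : Fin K, ((u j) : ℕ) = if j = i then (m : ℕ) else (j : ℕ) := by
      intro j
      rw [hu j]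
      split_ifs <;> rfl
    have hu_inj : Function.Injective u := by
      intro a b hab
      have hval : ((u a) : ℕ) = ((u b) : ℕ) := congrArg Fin.val hab
      rw [huv a, huv b] at hval
      have ha2 := a.2
      have hb2 := b.2
      split_ifs at hval with hA hB hB
      · rw [hA, hB]
      · exfalso; omega
      · exfalso; omega
      · exact Fin.ext hval
    have hzero : v x = 0 := by
      apply inj2 (v x) (hmemC x) 0 (zero_mem C) u hu_inj
      intro j
      rw [hu j]
      simp only [Pi.zero_apply]
      by_cases hj : j = i
      · rw [if_pos hj]; exact h0
      · rw [if_neg hj]; exact hrest j hj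
    rw [hzero] at hi
    exact hhne (by rw [← hi]; rfl)
  -- the two special codewords
  obtain ⟨c0, hc0⟩ := hθsurj (fun j => decide (j = j0))
  obtain ⟨c1, hc1⟩ := hθsurj (fun j => decide (j = j1))
  have hciff : ∀ (c : ↥(LinearMap.ker f)) (jz : Fin K), θ c = (fun j => decide (j = jz)) →
      ∀ j, v c (e j) = if j = jz then h else 0 := by
    intro c jz hc j
    have hj : (v c (e j) = h) ↔ (j = jz) := by
      have := congrFun hc j
      simpa [hθ, decide_eq_decide] using this
    by_cases hcase : j = jz
    · rw [if_pos hcase]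
      exact hj.mpr hcase
    · rw [if_neg hcase]
      rcases coords c (e j) with h1 | h1
      · exact h1
      · exact absurd (hj.mp h1) hcase
  have hc0e := hciff c0 j0 hc0
  have hc1e := hciff c1 j1 hc1
  have hc0rest : ∀ j, j ≠ j0 → v c0 (e j) = 0 := fun j hj => by rw [hc0e j, if_neg hj]
  have hc1rest : ∀ j, j ≠ j1 → v c1 (e j) = 0 := fun j hj => by rw [hc1e j, if_neg hj]
  have hc0j0 : v c0 (e j0) = h := by rw [hc0e j0, if_pos rfl]
  have hc1j1 : v c1 (e j1) = h := by rw [hc1e j1, if_pos rfl]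
  have hc0a : v c0 pa = h := hout c0 j0 pa (by omega) hc0j0 hc0rest
  have hc0b : v c0 pb = h := hout c0 j0 pb (by omega) hc0j0 hc0rest
  have hc1a : v c1 pa = h := hout c1 j1 pa (by omega) hc1j1 hc1rest
  have hc1b : v c1 pb = h := hout c1 j1 pb (by omega) hc1j1 hc1rest
  -- final contradiction
  obtain ⟨w, hwdef⟩ : ∃ w : Fin n → R, w = v c0 + v c1 := ⟨_, rfl⟩
  have hwC : w ∈ C := by rw [hwdef]; exact add_mem (hmemC c0) (hmemC c1)
  have hwne : w ≠ 0 := by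
    intro h0
    rw [hwdef] at h0
    have hcontra := congrFun h0 (e j0)
    simp only [Pi.add_apply, Pi.zero_apply] at hcontra
    rw [hc0j0, hc1rest j0 hj01] at hcontra
    rw [add_zero] at hcontra
    exact hhne hcontra
  obtain ⟨u2, hu2⟩ : ∃ u2 : Fin K → Fin n, ∀ j, u2 j = if j = j0 then pa else if j = j1 then pb else e j := ⟨_, fun j => rfl⟩
  have hu2v : ∀ j : Fin K, ((u2 j) : ℕ) = if (j:ℕ) = 0 then K else if (j:ℕ) = 1 then K+1 else (j:ℕ) := by
    intro j
    by_cases h0 : (j:ℕ) = 0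
    · have hjj : j = j0 := Fin.ext h0
      rw [if_pos h0, hjj, hu2 j0, if_pos rfl]
      exact hpa
    · rw [if_neg h0]
      by_cases h1 : (j:ℕ) = 1
      · have hjj : j = j1 := Fin.ext h1
        rw [if_pos h1, hjj, hu2 j1, if_neg (Ne.symm hj01), if_pos rfl]
        exact hpb
      · rw [if_neg h1]
        have hne0 : j ≠ j0 := fun hc => h0 (by rw [hc])
        have hne1 : j ≠ j1 := fun hc => h1 (by rw [hc])
        rw [hu2 j, if_neg hne0, if_neg hne1]
  have hu2_inj : Function.Injective u2 := by
    intro a b hab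
    have hval : ((u2 a) : ℕ) = ((u2 b) : ℕ) := congrArg Fin.val hab
    rw [hu2v a, hu2v b] at hval
    have ha2 := a.2
    have hb2 := b.2
    apply Fin.ext
    split_ifs at hval <;> omega
  have hwzero : w = 0 := by
    apply inj2 w hwC 0 (zero_mem C) u2 hu2_inj
    intro j
    rw [hu2 j, hwdef]
    simp only [Pi.add_apply, Pi.zero_apply]
    by_cases hA : j = j0
    · rw [if_pos hA, hc0a, hc1a, hhh]
    · rw [if_neg hA]
      by_cases hB : j = j1
      · rw [if_pos hB, hc0b, hc1b, hhh]
      · rw [if_neg hB, hc0rest j hA, hc1rest j hB, add_zero]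
  exact hwne hwzero

theorem phiR_two_pow_bound (t n K : ℕ) (ht : 1 ≤ t) (hK : 2 ≤ K) (hn : K + 1 < n) :
    PhiR n K (2 ^ t) ≤ 2 ^ (t - 1) * (n - K) := by
  haveI : NeZero (2^t) := ⟨pow_ne_zero _ two_ne_zero⟩
  apply csSup_le'
  rintro d ⟨C, hrank, rfl⟩
  obtain ⟨x, hxC, hxne, hxnorm⟩ := exists_low_weight ht hK hn C hrank
  have h1 : minLee C ≤ leeWtVec x := Nat.sInf_le ⟨x, hxC, hxne, rfl⟩
  have h2 : leeWtVec x ≤ 2^(t-1) * hammingNorm x := by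
    rw [leeWtVec]
    rw [← Finset.sum_subset (Finset.filter_subset (fun i => x i ≠ 0) Finset.univ) ?_]
    · calc ∑ i ∈ Finset.univ.filter (fun i => x i ≠ 0), leeWt (x i)
          ≤ (Finset.univ.filter (fun i => x i ≠ 0)).card • 2^(t-1) :=
            Finset.sum_le_card_nsmul _ _ _ (fun i _ => leeWt_le ht (x i))
        _ = 2^(t-1) * hammingNorm x := by
            rw [smul_eq_mul, mul_comm]
            rfl
    · intro i _ hi
      simp only [Finset.mem_filter, Finset.mem_univ, true_and, not_not] at hi
      rw [hi]
      simp [leeWt]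
  have h3 : 2^(t-1) * hammingNorm x ≤ 2^(t-1) * (n - K) :=
    Nat.mul_le_mul_left _ hxnorm
  omega
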